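/- Carleman's theorem: given a continuous function f : ℝ → ℂ and a continuous strictly positive function ε : ℝ → (0,∞), there exists an entire function g : ℂ → ℂ such that |f(x) - g(x)| < ε(x) for every x ∈ ℝ. -/

import Mathlib

open Complex Set Filter

/-- Complex-valued Weierstrass approximation on a symmetric interval, by an entire function. -/
lemma weierstrassC (L : ℝ) (F : ℝ → ℂ) (hF : Continuous F) {η : ℝ} (hη : 0 < η) :
    ∃ q : ℂ → ℂ, Differentiable ℂ q ∧ ∀ x : ℝ, x ∈ Set.Icc (-L) L → ‖F x - q x‖ ≤ η := by
  obtain ⟨p₁, hp₁⟩ := exists_polynomial_near_of_continuousOn (-L) L (fun x => (F x).re)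
    (Continuous.continuousOn (by continuity)) (η/2) (by positivity)
  obtain ⟨p₂, hp₂⟩ := exists_polynomial_near_of_continuousOn (-L) L (fun x => (F x).im)
    (Continuous.continuousOn (by continuity)) (η/2) (by positivity)
  refine ⟨fun z => (p₁.map Complex.ofRealHom).eval z + Complex.I * (p₂.map Complex.ofRealHom).eval z,
    ?_, ?_⟩
  · exact ((p₁.map Complex.ofRealHom).differentiable).add
      (differentiable_const _ |>.mul (p₂.map Complex.ofRealHom).differentiable)
  · intro x hx
    have e1 : (p₁.map Complex.ofRealHom).eval (x : ℂ) = ((p₁.eval x : ℝ) : ℂ) := by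
      rw [Polynomial.eval_map]; exact Polynomial.eval₂_at_apply _ _
    have e2 : (p₂.map Complex.ofRealHom).eval (x : ℂ) = ((p₂.eval x : ℝ) : ℂ) := by
      rw [Polynomial.eval_map]; exact Polynomial.eval₂_at_apply _ _
    simp only [e1, e2]
    have hre : (F x - (((p₁.eval x : ℝ) : ℂ) + Complex.I * ((p₂.eval x : ℝ) : ℂ))).re
        = (F x).re - p₁.eval x := by simp
    have him : (F x - (((p₁.eval x : ℝ) : ℂ) + Complex.I * ((p₂.eval x : ℝ) : ℂ))).im
        = (F x).im - p₂.eval x := by simp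
    calc ‖F x - (((p₁.eval x : ℝ) : ℂ) + Complex.I * ((p₂.eval x : ℝ) : ℂ))‖
        ≤ |(F x - (((p₁.eval x : ℝ) : ℂ) + Complex.I * ((p₂.eval x : ℝ) : ℂ))).re| +
          |(F x - (((p₁.eval x : ℝ) : ℂ) + Complex.I * ((p₂.eval x : ℝ) : ℂ))).im| :=
          Complex.norm_le_abs_re_add_abs_im _
      _ ≤ η/2 + η/2 := by
          rw [hre, him]
          gcongr
          · exact le_of_lt (by simpa [abs_sub_comm] using hp₁ x hx)
          · exact le_of_lt (by simpa [abs_sub_comm] using hp₂ x hx)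
      _ = η := by ring

set_option maxHeartbeats 2000000 in
/-- One-sided approximation lemma: an entire function that is small on the disc of radius `R`
and on `[-(R+3/2), -R]`, approximately `h` on `[R+1/4, R+3/2]`, and not too large on the
gap `[R, R+1/4]`. -/
lemma osl (R : ℝ) (hR : 1/2 ≤ R) (h : ℝ → ℂ) (hh : Continuous h) {θ η : ℝ}
    (hθ : ∀ x : ℝ, x ∈ Set.Icc R (R + 1/4) → ‖h x‖ ≤ θ) (hη : 0 < η) :
    ∃ q : ℂ → ℂ, Differentiable ℂ q ∧
      (∀ z : ℂ, ‖z‖ ≤ R → ‖q z‖ ≤ η) ∧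
      (∀ x : ℝ, x ∈ Set.Icc (-(R + 3/2)) (-R) → ‖q x‖ ≤ η) ∧
      (∀ x : ℝ, x ∈ Set.Icc R (R + 1/4) → ‖q x - h x‖ ≤ 2 * θ + η) ∧
      (∀ x : ℝ, x ∈ Set.Icc (R + 1/4) (R + 3/2) → ‖q x - h x‖ ≤ η) := by
  have hθ0 : 0 ≤ θ := le_trans (norm_nonneg _) (hθ R ⟨le_refl _, by linarith⟩)
  obtain ⟨L, hL⟩ : ∃ L : ℝ, L = R + 3/2 := ⟨_, rfl⟩
  rw [show R + 3/2 = L from hL.symm]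
  obtain ⟨γ, hγdef⟩ : ∃ γ : ℝ, γ = 2*R + 17/8 := ⟨_, rfl⟩
  have hγ : 0 < γ := by rw [hγdef]; linarith
  obtain ⟨c, hcdef⟩ : ∃ c : ℝ, c = R + 2 := ⟨_, rfl⟩
  -- cutoff χ
  set χ : ℝ → ℝ := fun x => min 1 (max 0 (4*(x - R))) with hχdef
  have χcont : Continuous χ := by
    apply continuous_const.min (continuous_const.max (by continuity))
  have χ0 : ∀ x : ℝ, x ≤ R → χ x = 0 := by
    intro x hx; simp only [hχdef]
    rw [max_eq_left (by linarith), min_eq_right (by norm_num)]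
  have χ1 : ∀ x : ℝ, R + 1/4 ≤ x → χ x = 1 := by
    intro x hx; simp only [hχdef]
    rw [max_eq_right (by linarith), min_eq_left (by linarith)]
  have χmem : ∀ x : ℝ, 0 ≤ χ x ∧ χ x ≤ 1 := by
    intro x; constructor
    · exact le_min (by norm_num) (le_max_left _ _)
    · exact min_le_left _ _
  set H : ℝ → ℂ := fun x => ((χ x : ℝ) : ℂ) * h x with hHdef
  have Hcont : Continuous H := by
    exact (Complex.continuous_ofReal.comp χcont).mul hh
  have Hnorm : ∀ x : ℝ, ‖H x‖ ≤ ‖h x‖ := by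
    intro x
    simp only [hHdef, norm_mul, Complex.norm_real]
    calc |χ x| * ‖h x‖ ≤ 1 * ‖h x‖ :=
            mul_le_mul_of_nonneg_right
              (by rw [_root_.abs_of_nonneg (χmem x).1]; exact (χmem x).2) (norm_nonneg _)
      _ = ‖h x‖ := one_mul _
  obtain ⟨B, hB⟩ := (isCompact_Icc (a := -L) (b := L)).exists_bound_of_continuousOn
    Hcont.continuousOn
  have hB0 : 0 ≤ B := le_trans (norm_nonneg _) (hB L ⟨by simp only [hL]; linarith, le_refl _⟩)
  obtain ⟨η₁, hη₁def⟩ : ∃ η₁ : ℝ, η₁ = min (η/2) 1 := ⟨_, rfl⟩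
  have hη₁ : 0 < η₁ := hη₁def ▸ lt_min (by positivity) one_pos
  have hη₁le : η₁ ≤ η/2 := hη₁def ▸ min_le_left _ _
  have hη₁1 : η₁ ≤ 1 := hη₁def ▸ min_le_right _ _
  obtain ⟨q₀, hq₀diff, hq₀⟩ := weierstrassC L H Hcont hη₁
  obtain ⟨M, hM⟩ := (isCompact_closedBall (0:ℂ) R).exists_bound_of_continuousOn
    hq₀diff.continuous.continuousOn
  have hM0 : 0 ≤ M := le_trans (norm_nonneg _)
    (hM 0 (by simp [Metric.mem_closedBall]; linarith))
  obtain ⟨r₀, hr₀def⟩ : ∃ r₀ : ℝ, r₀ = (2*R + 2)/γ := ⟨_, rfl⟩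
  obtain ⟨r₁, hr₁def⟩ : ∃ r₁ : ℝ, r₁ = (2*R + 9/4)/γ := ⟨_, rfl⟩
  have hr₀0 : 0 < r₀ := by rw [hr₀def]; exact div_pos (by linarith) hγ
  have hr₀1 : r₀ < 1 := by rw [hr₀def, div_lt_one hγ, hγdef]; linarith
  have hr₁1 : 1 < r₁ := by rw [hr₁def, lt_div_iff₀ hγ, hγdef]; linarith
  -- choose N
  have ev1 : ∀ᶠ N : ℕ in atTop, 2*(M+1)*r₀^N < η₁ := by
    have t1 : Tendsto (fun N : ℕ => 2*(M+1)*r₀^N) atTop (nhds 0) := by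
      have := tendsto_pow_atTop_nhds_zero_of_lt_one (le_of_lt hr₀0) hr₀1
      simpa using this.const_mul (2*(M+1))
    exact t1.eventually_lt_const hη₁
  have ev2 : ∀ᶠ N : ℕ in atTop, (B+1)*Real.exp (-r₁^N) < η₁ := by
    have t2 : Tendsto (fun N : ℕ => (B+1)*Real.exp (-r₁^N)) atTop (nhds 0) := by
      have h1 : Tendsto (fun N : ℕ => r₁^N) atTop atTop :=
        tendsto_pow_atTop_atTop_of_one_lt hr₁1
      have h2 := (Real.tendsto_exp_neg_atTop_nhds_zero).comp h1
      simpa using h2.const_mul (B+1)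
    exact t2.eventually_lt_const hη₁
  obtain ⟨N, hN1, hN2⟩ := (ev1.and ev2).exists
  have h2r : 2*r₀^N ≤ η₁ := by nlinarith [pow_nonneg (le_of_lt hr₀0) N]
  -- the entire cutoff
  set e : ℂ → ℂ := fun z => 1 - Complex.exp (-(((z + c)/γ))^N) with hedef
  have ediff : Differentiable ℂ e := by
    apply (Differentiable.neg ?_).cexp.const_sub
    exact ((differentiable_id.add_const _).div_const _).pow N
  -- smallness of e when ‖(z+c)/γ‖ ≤ r₀
  have esmall : ∀ z : ℂ, ‖(z + c)/γ‖ ≤ r₀ → ‖e z‖ ≤ 2*r₀^N := by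
    intro z hz
    have hwN : ‖(-(((z + c)/γ))^N)‖ ≤ r₀^N := by
      rw [norm_neg, norm_pow]
      exact pow_le_pow_left₀ (norm_nonneg _) hz N
    have hle1 : ‖(-(((z + c)/γ))^N)‖ ≤ 1 :=
      le_trans hwN (pow_le_one₀ (le_of_lt hr₀0) (le_of_lt hr₀1))
    calc ‖e z‖ = ‖Complex.exp (-(((z + c)/γ))^N) - 1‖ := by
            rw [hedef]; simp only []; rw [norm_sub_rev]
      _ ≤ 2 * ‖(-(((z + c)/γ))^N)‖ := by
            have := Complex.norm_exp_sub_one_le (x := (-(((z + c)/γ))^N))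
              hle1
            simpa using this
      _ ≤ 2 * r₀^N := by linarith
  -- real description of e
  have ereal : ∀ x : ℝ, e x = ((1 - Real.exp (-((x + c)/γ)^N) : ℝ) : ℂ) := by
    intro x
    have hw : (((x:ℂ) + (c:ℂ))/(γ:ℂ))^N = ((((x + c)/γ)^N : ℝ) : ℂ) := by push_cast; ring
    simp only [hedef, hw]
    rw [← Complex.ofReal_neg, ← Complex.ofReal_exp, ← Complex.ofReal_one, ← Complex.ofReal_sub]
  have hc0 : (0:ℝ) ≤ c := by rw [hcdef]; linarith
  have hLR : -R ≤ L := by rw [hL]; linarith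
  have hRL : R ≤ L := by rw [hL]; linarith
  -- w-bound on the disc
  have discw : ∀ z : ℂ, ‖z‖ ≤ R → ‖(z + (c:ℂ))/(γ:ℂ)‖ ≤ r₀ := by
    intro z hz
    rw [norm_div, Complex.norm_real, Real.norm_eq_abs, _root_.abs_of_pos hγ, hr₀def]
    gcongr
    calc ‖z + (c:ℂ)‖ ≤ ‖z‖ + ‖(c:ℂ)‖ := norm_add_le _ _
      _ ≤ R + c := by
          rw [Complex.norm_real, Real.norm_eq_abs, _root_.abs_of_nonneg hc0]; linarith
      _ = 2*R + 2 := by rw [hcdef]; ring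
  -- w-bound on the left segment
  have leftw : ∀ x : ℝ, x ∈ Set.Icc (-L) (-R) → ‖((x:ℂ) + (c:ℂ))/(γ:ℂ)‖ ≤ r₀ := by
    intro x hx
    have hx1 : -L ≤ x := hx.1
    have hx2 : x ≤ -R := hx.2
    have hcast : ((x:ℂ) + (c:ℂ))/(γ:ℂ) = (((x + c)/γ : ℝ) : ℂ) := by push_cast; ring
    have hxc : 0 ≤ x + c := by simp only [hcdef, hL] at *; linarith
    rw [hcast, Complex.norm_real, Real.norm_eq_abs,
      _root_.abs_of_nonneg (div_nonneg hxc (le_of_lt hγ)), hr₀def]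
    rw [div_le_div_iff_of_pos_right hγ, hcdef]
    linarith
  refine ⟨fun z => q₀ z * e z, hq₀diff.mul ediff, ?_, ?_, ?_, ?_⟩
  · -- disc bound
    intro z hz
    calc ‖q₀ z * e z‖ = ‖q₀ z‖ * ‖e z‖ := norm_mul _ _
      _ ≤ M * (2*r₀^N) := by
          apply mul_le_mul (hM z (by simpa [Metric.mem_closedBall, dist_eq_norm] using hz))
            (esmall z (discw z hz)) (norm_nonneg _) hM0
      _ ≤ 2*(M+1)*r₀^N := by nlinarith [pow_nonneg (le_of_lt hr₀0) N]
      _ ≤ η₁ := le_of_lt hN1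
      _ ≤ η := by linarith
  · -- left segment bound
    intro x hx
    have hq₀x : ‖q₀ (x:ℂ)‖ ≤ η₁ := by
      have hmem : x ∈ Set.Icc (-L) L := ⟨hx.1, le_trans hx.2 hLR⟩
      have h0 : H x = 0 := by
        have hxR' : x ≤ R := le_trans hx.2 (by linarith)
        simp only [hHdef, χ0 x hxR', Complex.ofReal_zero, zero_mul]
      have h1 := hq₀ x hmem
      rw [h0, zero_sub, norm_neg] at h1
      exact h1
    have hex : ‖e (x:ℂ)‖ ≤ 1 := le_trans (esmall _ (leftw x hx)) (by linarith)
    calc ‖q₀ (x:ℂ) * e (x:ℂ)‖ = ‖q₀ (x:ℂ)‖ * ‖e (x:ℂ)‖ := norm_mul _ _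
      _ ≤ η₁ * 1 := mul_le_mul hq₀x hex (norm_nonneg _) (le_of_lt hη₁)
      _ ≤ η := by linarith
  · -- gap bound
    intro x hx
    have hxR : R ≤ x := hx.1
    have ht0 : 0 ≤ (x + c)/γ := div_nonneg (by linarith) (le_of_lt hγ)
    have hex : ‖e (x:ℂ)‖ ≤ 1 := by
      rw [ereal x, Complex.norm_real, Real.norm_eq_abs]
      have h1 : Real.exp (-((x + c)/γ)^N) ≤ 1 := by
        simpa using Real.exp_le_exp.mpr (neg_nonpos.mpr (pow_nonneg ht0 N))
      have h2 : 0 < Real.exp (-((x + c)/γ)^N) := Real.exp_pos _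
      rw [abs_le]; constructor <;> linarith
    have hq₀x : ‖q₀ (x:ℂ)‖ ≤ θ + η₁ := by
      have hmem : x ∈ Set.Icc (-L) L := ⟨by linarith, by linarith [hx.2]⟩
      have h1 := hq₀ x hmem
      have h2 : ‖H x‖ ≤ θ := le_trans (Hnorm x) (hθ x hx)
      calc ‖q₀ (x:ℂ)‖ = ‖H x - (H x - q₀ (x:ℂ))‖ := by rw [sub_sub_cancel]
        _ ≤ ‖H x‖ + ‖H x - q₀ (x:ℂ)‖ := norm_sub_le _ _
        _ ≤ θ + η₁ := add_le_add h2 h1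
    calc ‖q₀ (x:ℂ) * e (x:ℂ) - h x‖ ≤ ‖q₀ (x:ℂ) * e (x:ℂ)‖ + ‖h x‖ := norm_sub_le _ _
      _ ≤ (θ + η₁) * 1 + θ := by
          apply add_le_add ?_ (hθ x hx)
          rw [norm_mul]
          exact mul_le_mul hq₀x hex (norm_nonneg _) (by linarith)
      _ ≤ 2*θ + η := by linarith
  · -- outer segment bound
    intro x hx
    have hxmem : x ∈ Set.Icc (-L) L := ⟨le_trans (by linarith) hx.1, hx.2⟩
    have hHx : H x = h x := by
      simp only [hHdef, χ1 x hx.1, Complex.ofReal_one, one_mul]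
    have hq₀x : ‖q₀ (x:ℂ)‖ ≤ B + η₁ := by
      calc ‖q₀ (x:ℂ)‖ = ‖H x - (H x - q₀ (x:ℂ))‖ := by rw [sub_sub_cancel]
        _ ≤ ‖H x‖ + ‖H x - q₀ (x:ℂ)‖ := norm_sub_le _ _
        _ ≤ B + η₁ := add_le_add (hB x hxmem) (hq₀ x hxmem)
    have hexm1 : ‖e (x:ℂ) - 1‖ ≤ Real.exp (-r₁^N) := by
      have hx0 : 0 ≤ x := by linarith [hx.1]
      have htr : r₁ ≤ (x + c)/γ := by
        rw [hr₁def]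
        rw [div_le_div_iff_of_pos_right hγ, hcdef]
        linarith [hx.1]
      have h1 : r₁^N ≤ ((x + c)/γ)^N :=
        pow_le_pow_left₀ (by linarith) htr N
      rw [ereal x]
      have heq : ((1 - Real.exp (-((x + c)/γ)^N) : ℝ) : ℂ) - 1
          = ((- Real.exp (-((x + c)/γ)^N) : ℝ) : ℂ) := by push_cast; ring
      rw [heq, Complex.norm_real, Real.norm_eq_abs, abs_neg,
        _root_.abs_of_pos (Real.exp_pos _)]
      exact Real.exp_le_exp.mpr (by linarith)
    have hexp0 : 0 ≤ Real.exp (-r₁^N) := le_of_lt (Real.exp_pos _)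
    have hsplit : q₀ (x:ℂ) * e (x:ℂ) - h x
        = q₀ (x:ℂ) * (e (x:ℂ) - 1) + (q₀ (x:ℂ) - H x) := by rw [hHx]; ring
    calc ‖q₀ (x:ℂ) * e (x:ℂ) - h x‖
        = ‖q₀ (x:ℂ) * (e (x:ℂ) - 1) + (q₀ (x:ℂ) - H x)‖ := by rw [hsplit]
      _ ≤ ‖q₀ (x:ℂ) * (e (x:ℂ) - 1)‖ + ‖q₀ (x:ℂ) - H x‖ := norm_add_le _ _
      _ ≤ (B + η₁) * Real.exp (-r₁^N) + η₁ := by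
          apply add_le_add
          · rw [norm_mul]
            exact mul_le_mul hq₀x hexm1 (norm_nonneg _) (by linarith)
          · rw [norm_sub_rev]; exact hq₀ x hxmem
      _ ≤ (B + 1) * Real.exp (-r₁^N) + η₁ := by
          have := mul_le_mul_of_nonneg_right (add_le_add_left hη₁1 B) hexp0
          linarith
      _ ≤ η₁ + η₁ := by linarith
      _ ≤ η := by linarith

/-- Two-sided key step: an entire function small on the disc of radius `R`, close to `h` on
`R + 1/4 ≤ |x| ≤ R + 3/2`, and within `2θ + η` of `h` on the gap `R ≤ |x| ≤ R + 1/4`. -/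
lemma keyStep (R : ℝ) (hR : 1/2 ≤ R) (h : ℝ → ℂ) (hh : Continuous h) {θ η : ℝ}
    (hθ : ∀ x : ℝ, R ≤ |x| → |x| ≤ R + 1/4 → ‖h x‖ ≤ θ) (hη : 0 < η) :
    ∃ p : ℂ → ℂ, Differentiable ℂ p ∧
      (∀ z : ℂ, ‖z‖ ≤ R → ‖p z‖ ≤ η) ∧
      (∀ x : ℝ, R ≤ |x| → |x| ≤ R + 1/4 → ‖p x - h x‖ ≤ 2*θ + η) ∧
      (∀ x : ℝ, R + 1/4 ≤ |x| → |x| ≤ R + 3/2 → ‖p x - h x‖ ≤ η) := by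
  have hR0 : 0 < R := by linarith
  have habs : ∀ x : ℝ, x ∈ Set.Icc R (R + 1/4) → (R ≤ |x| ∧ |x| ≤ R + 1/4) := by
    intro x hx
    rw [_root_.abs_of_nonneg (by linarith [hx.1])]
    exact ⟨hx.1, hx.2⟩
  have hθ1 : ∀ x : ℝ, x ∈ Set.Icc R (R + 1/4) → ‖h x‖ ≤ θ := fun x hx =>
    hθ x (habs x hx).1 (habs x hx).2
  have hθ2 : ∀ x : ℝ, x ∈ Set.Icc R (R + 1/4) → ‖h (-x)‖ ≤ θ := by
    intro x hx
    obtain ⟨h1, h2⟩ := habs x hx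
    exact hθ (-x) (by rwa [abs_neg]) (by rwa [abs_neg])
  obtain ⟨q₁, hq₁d, hq₁disc, hq₁left, hq₁gap, hq₁out⟩ :=
    osl R hR h hh hθ1 (half_pos hη)
  obtain ⟨q₂, hq₂d, hq₂disc, hq₂left, hq₂gap, hq₂out⟩ :=
    osl R hR (fun x => h (-x)) (hh.comp continuous_neg) hθ2 (half_pos hη)
  refine ⟨fun z => q₁ z + q₂ (-z), hq₁d.add (hq₂d.comp differentiable_neg), ?_, ?_, ?_⟩
  · intro z hz
    calc ‖q₁ z + q₂ (-z)‖ ≤ ‖q₁ z‖ + ‖q₂ (-z)‖ := norm_add_le _ _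
      _ ≤ η/2 + η/2 := add_le_add (hq₁disc z hz) (hq₂disc (-z) (by rwa [norm_neg]))
      _ = η := by ring
  · intro x hx1 hx2
    have hcast : -(x:ℂ) = ((-x : ℝ) : ℂ) := by push_cast; ring
    rcases le_or_gt 0 x with hx0 | hx0
    · rw [_root_.abs_of_nonneg hx0] at hx1 hx2
      have hmem : x ∈ Set.Icc R (R + 1/4) := ⟨hx1, hx2⟩
      have h2 : ‖q₂ (-(x:ℂ))‖ ≤ η/2 := by
        rw [hcast]
        exact hq₂left (-x) ⟨by linarith, by linarith⟩
      calc ‖q₁ (x:ℂ) + q₂ (-(x:ℂ)) - h x‖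
          ≤ ‖q₁ (x:ℂ) - h x‖ + ‖q₂ (-(x:ℂ))‖ := by
            have : q₁ (x:ℂ) + q₂ (-(x:ℂ)) - h x = (q₁ (x:ℂ) - h x) + q₂ (-(x:ℂ)) := by ring
            rw [this]; exact norm_add_le _ _
        _ ≤ (2*θ + η/2) + η/2 := add_le_add (hq₁gap x hmem) h2
        _ = 2*θ + η := by ring
    · rw [_root_.abs_of_neg hx0] at hx1 hx2
      have hmem : -x ∈ Set.Icc R (R + 1/4) := ⟨hx1, hx2⟩
      have h2 : ‖q₂ (-(x:ℂ)) - h x‖ ≤ 2*θ + η/2 := by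
        rw [hcast]
        simpa using hq₂gap (-x) hmem
      have h1 : ‖q₁ (x:ℂ)‖ ≤ η/2 := hq₁left x ⟨by linarith, by linarith⟩
      calc ‖q₁ (x:ℂ) + q₂ (-(x:ℂ)) - h x‖
          ≤ ‖q₂ (-(x:ℂ)) - h x‖ + ‖q₁ (x:ℂ)‖ := by
            have : q₁ (x:ℂ) + q₂ (-(x:ℂ)) - h x = (q₂ (-(x:ℂ)) - h x) + q₁ (x:ℂ) := by ring
            rw [this]; exact norm_add_le _ _
        _ ≤ (2*θ + η/2) + η/2 := add_le_add h2 h1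
        _ = 2*θ + η := by ring
  · intro x hx1 hx2
    have hcast : -(x:ℂ) = ((-x : ℝ) : ℂ) := by push_cast; ring
    rcases le_or_gt 0 x with hx0 | hx0
    · rw [_root_.abs_of_nonneg hx0] at hx1 hx2
      have h2 : ‖q₂ (-(x:ℂ))‖ ≤ η/2 := by
        rw [hcast]
        exact hq₂left (-x) ⟨by linarith, by linarith⟩
      calc ‖q₁ (x:ℂ) + q₂ (-(x:ℂ)) - h x‖
          ≤ ‖q₁ (x:ℂ) - h x‖ + ‖q₂ (-(x:ℂ))‖ := by
            have : q₁ (x:ℂ) + q₂ (-(x:ℂ)) - h x = (q₁ (x:ℂ) - h x) + q₂ (-(x:ℂ)) := by ring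
            rw [this]; exact norm_add_le _ _
        _ ≤ η/2 + η/2 := add_le_add (hq₁out x ⟨hx1, hx2⟩) h2
        _ = η := by ring
    · rw [_root_.abs_of_neg hx0] at hx1 hx2
      have h2 : ‖q₂ (-(x:ℂ)) - h x‖ ≤ η/2 := by
        rw [hcast]
        simpa using hq₂out (-x) ⟨hx1, hx2⟩
      have h1 : ‖q₁ (x:ℂ)‖ ≤ η/2 := hq₁left x ⟨by linarith, by linarith⟩
      calc ‖q₁ (x:ℂ) + q₂ (-(x:ℂ)) - h x‖
          ≤ ‖q₂ (-(x:ℂ)) - h x‖ + ‖q₁ (x:ℂ)‖ := by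
            have : q₁ (x:ℂ) + q₂ (-(x:ℂ)) - h x = (q₂ (-(x:ℂ)) - h x) + q₁ (x:ℂ) := by ring
            rw [this]; exact norm_add_le _ _
        _ ≤ η/2 + η/2 := add_le_add h2 h1
        _ = η := by ring

/-- Carleman's theorem: given a continuous function `f : ℝ → ℂ` and a continuous strictly
positive function `ε : ℝ → (0,∞)`, there exists an entire function `g : ℂ → ℂ` such that
`|f x - g x| < ε x` for every `x ∈ ℝ`. -/
theorem carleman (f : ℝ → ℂ) (hf : Continuous f)
    (ε : ℝ → ℝ) (hε : Continuous ε) (hεpos : ∀ x, 0 < ε x) :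
    ∃ g : ℂ → ℂ, Differentiable ℂ g ∧ ∀ x : ℝ, ‖f x - g x‖ < ε x := by
  classical
  -- minimum points of ε on expanding windows
  have hmin : ∀ m : ℕ, ∃ y ∈ Set.Icc (-(m:ℝ) - 2) ((m:ℝ) + 2),
      ∀ z ∈ Set.Icc (-(m:ℝ) - 2) ((m:ℝ) + 2), ε y ≤ ε z := by
    intro m
    obtain ⟨y, hy1, hy2⟩ := (isCompact_Icc (a := -(m:ℝ) - 2) (b := (m:ℝ) + 2)).exists_isMinOn
      (Set.nonempty_Icc.mpr (by linarith [Nat.cast_nonneg (α := ℝ) m]))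
      hε.continuousOn
    exact ⟨y, hy1, fun z hz => hy2 hz⟩
  choose xm hxm1 hxm2 using hmin
  set δ : ℕ → ℝ := fun m => ε (xm m) / (64 * 2^m) with hδdef
  have hδpos : ∀ m, 0 < δ m := by
    intro m
    apply div_pos (hεpos _) (by positivity)
  have hwin : ∀ m k : ℕ, ε (xm (m + k)) ≤ ε (xm m) := by
    intro m k
    apply hxm2 (m+k) (xm m)
    have := hxm1 m
    constructor
    · have := this.1; push_cast; push_cast at this; linarith [Nat.cast_nonneg (α := ℝ) k]
    · have := this.2; push_cast; push_cast at this; linarith [Nat.cast_nonneg (α := ℝ) k]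
  have hδle : ∀ m k : ℕ, δ (m + k) ≤ δ m * (1/2)^k := by
    intro m k
    have h1 : (0:ℝ) < 64 * 2^m := by positivity
    have h2 : (0:ℝ) < 2^k := by positivity
    calc δ (m+k) = ε (xm (m+k)) / (64 * 2^m * 2^k) := by
            rw [hδdef]; simp only []; rw [pow_add]; ring_nf
      _ ≤ ε (xm m) / (64 * 2^m * 2^k) := by
            rw [div_le_div_iff_of_pos_right (by positivity)]
            exact hwin m k
      _ = δ m * (1/2)^k := by
            rw [hδdef]; simp only []
            rw [div_pow, one_pow]
            field_simp
  have hδmono : ∀ m, δ (m+1) ≤ δ m := by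
    intro m
    have := hδle m 1
    simp only [pow_one] at this
    linarith [hδpos m, this]
  have hδsum : Summable δ := by
    apply Summable.of_nonneg_of_le (fun m => le_of_lt (hδpos m)) (fun m => ?_)
      ((summable_geometric_two).mul_left (δ 0))
    simpa using hδle 0 m
  -- the inductive invariant
  set Good : ℕ → (ℂ → ℂ) → Prop := fun m S => Differentiable ℂ S ∧
    ∀ x : ℝ, (m:ℝ) - 1/4 ≤ |x| → |x| ≤ (m:ℝ) + 1 → ‖f x - S x‖ ≤ δ m with hGooddef
  -- the base entire approximation on [-1, 1]
  obtain ⟨S₀, hS₀diff, hS₀⟩ := weierstrassC 1 f hf (hδpos 0)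
  have good₀ : Good 0 S₀ := by
    refine ⟨hS₀diff, fun x hx1 hx2 => ?_⟩
    exact hS₀ x (abs_le.mp (by push_cast at hx2; linarith))
  -- the inductive step
  have step : ∀ m : ℕ, ∀ S : ℂ → ℂ, Good m S → ∃ p : ℂ → ℂ,
      Differentiable ℂ p ∧
      (∀ z : ℂ, ‖z‖ ≤ (m:ℝ) + 1/2 → ‖p z‖ ≤ δ (m+1)) ∧
      (∀ x : ℝ, (m:ℝ) + 1/2 ≤ |x| → |x| ≤ (m:ℝ) + 3/4 → ‖p x‖ ≤ 4 * δ m) ∧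
      Good (m+1) (fun z => S z + p z) := by
    intro m S hS
    have hcont : Continuous (fun x : ℝ => f x - S (x:ℂ)) :=
      hf.sub (hS.1.continuous.comp Complex.continuous_ofReal)
    have hθ : ∀ x : ℝ, (m:ℝ) + 1/2 ≤ |x| → |x| ≤ ((m:ℝ) + 1/2) + 1/4 →
        ‖f x - S (x:ℂ)‖ ≤ δ m := by
      intro x h1 h2
      exact hS.2 x (by linarith) (by linarith)
    obtain ⟨p, hpd, hpdisc, hpgap, hpout⟩ := keyStep ((m:ℝ) + 1/2)
      (by linarith [Nat.cast_nonneg (α := ℝ) m]) _ hcont hθ (hδpos (m+1))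
    refine ⟨p, hpd, hpdisc, ?_, ⟨hS.1.add hpd, ?_⟩⟩
    · intro x h1 h2
      calc ‖p (x:ℂ)‖ = ‖(p (x:ℂ) - (f x - S (x:ℂ))) + (f x - S (x:ℂ))‖ := by ring_nf
        _ ≤ ‖p (x:ℂ) - (f x - S (x:ℂ))‖ + ‖f x - S (x:ℂ)‖ := norm_add_le _ _
        _ ≤ (2 * δ m + δ (m+1)) + δ m := add_le_add (hpgap x h1 (by linarith)) (hθ x h1 (by linarith))
        _ ≤ 4 * δ m := by linarith [hδmono m]
    · intro x hx1 hx2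
      have heq : f x - (S (x:ℂ) + p (x:ℂ)) = -(p (x:ℂ) - (f x - S (x:ℂ))) := by ring
      rw [heq, norm_neg]
      apply hpout x (by push_cast at hx1 ⊢; linarith) (by push_cast at hx2 ⊢; linarith)
  -- construct the sequence of partial sums by recursion with choice
  let Q : ∀ m : ℕ, {S : ℂ → ℂ // Good m S} := fun m => Nat.rec
    (⟨S₀, good₀⟩ : {S : ℂ → ℂ // Good 0 S})
    (fun m ih => ⟨fun z => ih.1 z + Classical.choose (step m ih.1 ih.2) z,
      (Classical.choose_spec (step m ih.1 ih.2)).2.2.2⟩) m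
  let u : ℕ → ℂ → ℂ := fun m => Classical.choose (step m (Q m).1 (Q m).2)
  have hu : ∀ m : ℕ, Differentiable ℂ (u m) ∧
      (∀ z : ℂ, ‖z‖ ≤ (m:ℝ) + 1/2 → ‖u m z‖ ≤ δ (m+1)) ∧
      (∀ x : ℝ, (m:ℝ) + 1/2 ≤ |x| → |x| ≤ (m:ℝ) + 3/4 → ‖u m x‖ ≤ 4 * δ m) := by
    intro m
    obtain ⟨h1, h2, h3, _⟩ := Classical.choose_spec (step m (Q m).1 (Q m).2)
    exact ⟨h1, h2, h3⟩
  have hQsucc : ∀ m, (Q (m+1)).1 = fun z => (Q m).1 z + u m z := fun m => rfl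
  have hGood : ∀ m, Good m (Q m).1 := fun m => (Q m).2
  -- pointwise norm bounds on increments at large indices
  have hub : ∀ (m k : ℕ) (x : ℝ), |x| ≤ (m:ℝ) + 3/4 → ‖u (m + k) (x:ℂ)‖ ≤ 4 * δ m * (1/2)^k := by
    intro m k x hx
    have hz : ‖(x:ℂ)‖ = |x| := by rw [Complex.norm_real, Real.norm_eq_abs]
    rcases Nat.eq_zero_or_pos k with hk | hk
    · subst hk
      simp only [Nat.add_zero, pow_zero, mul_one]
      rcases le_or_gt (|x|) ((m:ℝ) + 1/2) with h | h
      · calc ‖u m (x:ℂ)‖ ≤ δ (m+1) := (hu m).2.1 (x:ℂ) (by rw [hz]; exact h)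
          _ ≤ δ m := hδmono m
          _ ≤ 4 * δ m := by linarith [hδpos m]
      · exact (hu m).2.2 x (le_of_lt h) hx
    · have h1 : ‖(x:ℂ)‖ ≤ ((m + k : ℕ):ℝ) + 1/2 := by
        rw [hz]
        push_cast
        have : (1:ℝ) ≤ (k:ℝ) := by exact_mod_cast hk
        linarith
      calc ‖u (m+k) (x:ℂ)‖ ≤ δ (m+k+1) := (hu (m+k)).2.1 (x:ℂ) h1
        _ ≤ δ m * (1/2)^(k+1) := by
            have := hδle m (k+1)
            rwa [show m + (k+1) = m + k + 1 from rfl] at this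
        _ ≤ 4 * δ m * (1/2)^k := by
            rw [pow_succ]
            nlinarith [hδpos m, pow_pos (show (0:ℝ) < 1/2 by norm_num) k]
  -- telescoping
  have hQeq : ∀ m : ℕ, ∀ z : ℂ, (Q m).1 z = S₀ z + ∑ j ∈ Finset.range m, u j z := by
    intro m
    induction m with
    | zero => intro z; simp [Q]
    | succ m ih =>
        intro z
        rw [hQsucc m]
        show (Q m).1 z + u m z = _
        rw [ih z, Finset.sum_range_succ]
        ring
  -- summability of the increments at every point
  have husum : ∀ z : ℂ, Summable (fun m => u m z) := by
    intro z
    set M₀ := ⌈‖z‖⌉₊ with hM₀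
    rw [← summable_nat_add_iff M₀]
    have hmaj : Summable (fun n : ℕ => δ (M₀ + n + 1)) := by
      have h1 := (summable_nat_add_iff (f := δ) (M₀ + 1)).mpr hδsum
      apply h1.congr
      intro n
      exact congrArg δ (by omega)
    apply Summable.of_norm_bounded hmaj
    intro n
    have hceil : ‖z‖ ≤ (M₀:ℝ) := by rw [hM₀]; exact Nat.le_ceil ‖z‖
    have hz : ‖z‖ ≤ ((M₀ + n : ℕ):ℝ) + 1/2 := by
      push_cast
      linarith [Nat.cast_nonneg (α := ℝ) n]
    have := (hu (M₀ + n)).2.1 z (by push_cast at hz ⊢; linarith)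
    calc ‖u (n + M₀) z‖ = ‖u (M₀ + n) z‖ := by rw [Nat.add_comm]
      _ ≤ δ (M₀ + n + 1) := this
  -- the limit function
  set g : ℂ → ℂ := fun z => S₀ z + ∑' m, u m z with hgdef
  have hgrep : ∀ (M : ℕ) (z : ℂ), g z = (Q M).1 z + ∑' m, u (m + M) z := by
    intro M z
    have := (husum z).sum_add_tsum_nat_add M
    rw [hgdef]
    simp only []
    rw [← this, hQeq M z]
    ring
  have hgdiff : Differentiable ℂ g := by
    intro z₀
    set r : ℝ := ‖z₀‖ + 1 with hr
    set M₀ := ⌈r⌉₊ with hM₀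
    have hU : IsOpen (Metric.ball (0:ℂ) r) := Metric.isOpen_ball
    have hmaj : Summable (fun n : ℕ => δ (n + M₀ + 1)) := by
      have h1 := (summable_nat_add_iff (f := δ) (M₀ + 1)).mpr hδsum
      apply h1.congr
      intro n
      exact congrArg δ (by omega)
    have hdiffsum : DifferentiableOn ℂ (fun z => ∑' m, u (m + M₀) z) (Metric.ball 0 r) := by
      apply differentiableOn_tsum_of_summable_norm hmaj
        (fun m => ((hu (m + M₀)).1).differentiableOn) hU
      intro m w hw
      apply (hu (m + M₀)).2.1 w
      have h1 : ‖w‖ < r := by simpa [Metric.mem_ball, dist_eq_norm] using hw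
      have h2 : r ≤ (M₀:ℝ) := Nat.le_ceil r
      push_cast
      linarith [Nat.cast_nonneg (α := ℝ) m]
    have hgOn : DifferentiableOn ℂ g (Metric.ball 0 r) := by
      apply DifferentiableOn.congr (((Q M₀).2.1.differentiableOn).add hdiffsum)
      intro z hz
      exact hgrep M₀ z
    apply hgOn.differentiableAt (hU.mem_nhds ?_)
    simp only [Metric.mem_ball, dist_eq_norm, sub_zero, hr]
    linarith
  -- final estimate
  refine ⟨g, hgdiff, fun x => ?_⟩
  set m₀ := ⌈|x| - 3/4⌉₊ with hm₀
  have hxu : |x| ≤ (m₀:ℝ) + 3/4 := by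
    have := Nat.le_ceil (|x| - 3/4)
    rw [← hm₀] at this
    linarith
  have hxl : (m₀:ℝ) - 1/4 ≤ |x| := by
    rcases Nat.eq_zero_or_pos m₀ with h | h
    · rw [h]; push_cast; linarith [abs_nonneg x]
    · have hpos : 0 ≤ |x| - 3/4 := by
        by_contra hc
        push_neg at hc
        have h0 : m₀ = 0 := by rw [hm₀]; exact Nat.ceil_eq_zero.mpr (by linarith)
        omega
      have hlt := Nat.ceil_lt_add_one hpos
      rw [← hm₀] at hlt
      linarith
  have h1 : ‖f x - (Q m₀).1 x‖ ≤ δ m₀ := (hGood m₀).2 x hxl (by linarith)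
  have hsn : Summable (fun m : ℕ => ‖u (m + m₀) (x:ℂ)‖) := by
    apply ((summable_nat_add_iff m₀).mpr (husum (x:ℂ))).norm
  have hsmaj : Summable (fun m : ℕ => 4 * δ m₀ * (1/2:ℝ)^m) :=
    (summable_geometric_two).mul_left _
  have h2 : ‖∑' m, u (m + m₀) (x:ℂ)‖ ≤ 8 * δ m₀ := by
    calc ‖∑' m, u (m + m₀) (x:ℂ)‖ ≤ ∑' m, ‖u (m + m₀) (x:ℂ)‖ := norm_tsum_le_tsum_norm hsn
      _ ≤ ∑' m : ℕ, 4 * δ m₀ * (1/2:ℝ)^m := by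
          apply Summable.tsum_le_tsum ?_ hsn hsmaj
          intro m
          calc ‖u (m + m₀) (x:ℂ)‖ = ‖u (m₀ + m) (x:ℂ)‖ := by rw [Nat.add_comm]
            _ ≤ 4 * δ m₀ * (1/2)^m := hub m₀ m x hxu
      _ = 8 * δ m₀ := by
          rw [tsum_mul_left, tsum_geometric_two]
          ring
  have hεeq : ε (xm m₀) = 64 * 2^(m₀:ℕ) * δ m₀ := by
    have hd : δ m₀ = ε (xm m₀) / (64 * 2^(m₀:ℕ)) := by rw [hδdef]
    rw [hd]
    field_simp
  have h2m : (1:ℝ) ≤ 2^(m₀:ℕ) := one_le_pow₀ (by norm_num)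
  calc ‖f x - g x‖ = ‖(f x - (Q m₀).1 x) - ∑' m, u (m + m₀) (x:ℂ)‖ := by
        rw [hgrep m₀ x]
        congr 1
        ring
    _ ≤ ‖f x - (Q m₀).1 x‖ + ‖∑' m, u (m + m₀) (x:ℂ)‖ := norm_sub_le _ _
    _ ≤ δ m₀ + 8 * δ m₀ := add_le_add h1 h2
    _ = 9 * δ m₀ := by ring
    _ < ε (xm m₀) := by
        rw [hεeq]
        nlinarith [hδpos m₀]
    _ ≤ ε x := by
        apply hxm2 m₀ x
        rw [Set.mem_Icc]
        constructor
        · rcases abs_le.mp (le_trans hxu (by linarith : (m₀:ℝ) + 3/4 ≤ (m₀:ℝ) + 2)) with ⟨hl, _⟩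
          linarith
        · rcases abs_le.mp (le_trans hxu (by linarith : (m₀:ℝ) + 3/4 ≤ (m₀:ℝ) + 2)) with ⟨_, hr⟩
          linarith
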